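/- Let a ∈ ℝ, h real symmetric, nonvanishing on Re s = a, with h(a) > 0, f⁺(s) = h(s) + h(2a−s), and φ(τ) = arg h(a+iτ) continuous with φ(0)=0. Then the number N₀'(T) of distinct zeros of f⁺ on {a+iτ : 0 < τ < T} satisfies N₀'(T) ≥ (1/π) φ(T) − 1/2 for all T > 0; moreover f⁺(a) = 2h(a) ≠ 0, so s = a is not a zero of f⁺. -/

import Mathlib

open Complex

theorem stmt_5 (a : ℝ) (h : ℂ → ℂ) (φ : ℝ → ℝ)
    (hholo : ∀ τ : ℝ, DifferentiableAt ℂ h ((a : ℂ) + τ * I))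
    (hreal : ∀ s : ℂ, h (starRingEnd ℂ s) = starRingEnd ℂ (h s))
    (hne : ∀ τ : ℝ, h ((a : ℂ) + τ * I) ≠ 0)
    (hpos : 0 < (h (a : ℂ)).re)
    (hφc : Continuous φ) (hφ0 : φ 0 = 0)
    (hpolar : ∀ τ : ℝ, h ((a : ℂ) + τ * I) =
      (‖h ((a : ℂ) + τ * I)‖ : ℂ) * Complex.exp (φ τ * I)) :
    (h (a : ℂ) + h (2 * a - (a : ℂ)) ≠ 0) ∧
    ∀ T : ℝ, 0 < T →
      {τ : ℝ | 0 < τ ∧ τ < T ∧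
          h ((a : ℂ) + τ * I) + h (2 * a - ((a : ℂ) + τ * I)) = 0}.Infinite ∨
      (1 / Real.pi) * φ T - 1 / 2 ≤
        (({τ : ℝ | 0 < τ ∧ τ < T ∧
          h ((a : ℂ) + τ * I) + h (2 * a - ((a : ℂ) + τ * I)) = 0}).ncard : ℝ) := by
  have hπ := Real.pi_pos
  constructor
  · have ha : (2*(a:ℂ) - a) = a := by ring
    rw [ha]
    intro hz
    have h0 : (h (a:ℂ) + h (a:ℂ)).re = 0 := by rw [hz]; simp
    simp only [Complex.add_re] at h0
    linarith
  · intro T hT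
    set S := {τ : ℝ | 0 < τ ∧ τ < T ∧
        h ((a : ℂ) + τ * I) + h (2 * a - ((a : ℂ) + τ * I)) = 0} with hS
    by_cases hfin : S.Finite
    swap
    · exact Or.inl hfin
    right
    have hzero : ∀ τ : ℝ, Real.cos (φ τ) = 0 →
        h ((a:ℂ) + τ*I) + h (2*a - ((a:ℂ)+τ*I)) = 0 := by
      intro τ hc
      have hconj : (2*(a:ℂ) - ((a:ℂ) + τ*I)) = starRingEnd ℂ ((a:ℂ) + τ*I) := by
        rw [Complex.ext_iff]
        constructor <;> simp <;> ring
      rw [hconj, hreal, Complex.add_conj]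
      have hre : (h ((a:ℂ)+τ*I)).re = 0 := by
        rw [hpolar τ]
        simp [hc]
      rw [hre]
      simp
    by_cases hcase : φ T ≤ Real.pi/2
    · have h1 : (1/Real.pi) * φ T - 1/2 ≤ 0 := by
        rw [div_mul_eq_mul_div, one_mul, sub_nonpos, div_le_iff₀ hπ]
        linarith
      exact h1.trans (by positivity)
    · push_neg at hcase
      set x := φ T / Real.pi - 1/2 with hx
      have hx0 : 0 < x := by
        rw [hx, sub_pos, lt_div_iff₀ hπ]
        linarith
      set n := ⌈x⌉₊ with hn
      have hle : x ≤ (n:ℝ) := Nat.le_ceil x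
      clear_value n
      have hceil : (n:ℝ) - 1 < x := by
        have := Nat.ceil_lt_add_one hx0.le
        rw [← hn] at this
        linarith
      clear_value x
      have hkey : ∀ k : Fin n, ∃ τ, τ ∈ Set.Ioo (0:ℝ) T ∧ φ τ = ((k:ℝ) + 1/2) * Real.pi := by
        intro k
        have hk : (k:ℝ) ≤ (n:ℝ) - 1 := by
          have hk1 : (k:ℕ) + 1 ≤ n := k.2
          have : ((k:ℕ):ℝ) + 1 ≤ (n:ℝ) := by exact_mod_cast hk1
          linarith
        have h1 : (0:ℝ) < ((k:ℝ) + 1/2) * Real.pi := by positivity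
        have h2 : ((k:ℝ) + 1/2) * Real.pi < φ T := by
          have : (k:ℝ) + 1/2 < φ T / Real.pi := by
            have : (k:ℝ) + 1/2 < x + 1/2 := by linarith
            rw [hx] at this; linarith
          calc ((k:ℝ) + 1/2) * Real.pi < (φ T / Real.pi) * Real.pi := by
                exact mul_lt_mul_of_pos_right this hπ
            _ = φ T := by field_simp
        have hmem : ((k:ℝ)+1/2)*Real.pi ∈ Set.Ioo (φ 0) (φ T) := by
          rw [hφ0]; exact ⟨h1, h2⟩
        obtain ⟨τ, hτ, hφτ⟩ := intermediate_value_Ioo hT.le hφc.continuousOn hmem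
        exact ⟨τ, hτ, hφτ⟩
      choose g hg1 hg2 using hkey
      have hinj : Function.Injective g := by
        intro i j hij
        have : ((i:ℝ) + 1/2) * Real.pi = ((j:ℝ) + 1/2) * Real.pi := by
          rw [← hg2 i, ← hg2 j, hij]
        have hij' : (i:ℝ) = (j:ℝ) := by
          have := mul_right_cancel₀ hπ.ne' this
          linarith
        have : (i:ℕ) = (j:ℕ) := by exact_mod_cast hij'
        exact Fin.ext this
      have hsub : Set.range g ⊆ S := by
        rintro _ ⟨k, rfl⟩
        refine ⟨(hg1 k).1, (hg1 k).2, hzero _ ?_⟩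
        rw [hg2 k, Real.cos_eq_zero_iff]
        exact ⟨(k:ℤ), by push_cast; ring⟩
      have hcard : n ≤ S.ncard := by
        have h1 : (Set.range g).ncard = n := by
          have : Set.range g = ↑(Finset.image g Finset.univ) := by
            simp [Set.ext_iff]
          rw [this, Set.ncard_coe_finset, Finset.card_image_of_injective _ hinj,
            Finset.card_univ, Fintype.card_fin]
        rw [← h1]
        exact Set.ncard_le_ncard hsub hfin
      have hcast : (n:ℝ) ≤ (S.ncard : ℝ) := by exact_mod_cast hcard
      have : (1/Real.pi) * φ T = φ T / Real.pi := by ring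
      rw [this]
      rw [hx] at hle
      linarith
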